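/- There exists a countably infinite set P of points in the real plane such that P contains no 4 collinear points and no 3 points of P are pairwise visible (where distinct points v, w are visible with respect to P if no point of P lies in the open segment between v and w). -/

import Mathlib

/-- `v` and `w` are visible with respect to `P`: they are distinct and no point of `P`
lies in the open segment between them. -/
def Visible (P : Set (ℝ × ℝ)) (v w : ℝ × ℝ) : Prop :=
  v ≠ w ∧ ∀ p ∈ P, p ∉ openSegment ℝ v w

/-- `P` contains no 4 collinear points. -/
def No4Collinear (P : Set (ℝ × ℝ)) : Prop :=
  ∀ a ∈ P, ∀ b ∈ P, ∀ c ∈ P, ∀ d ∈ P,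
    a ≠ b → a ≠ c → a ≠ d → b ≠ c → b ≠ d → c ≠ d →
    ¬ Collinear ℝ ({a, b, c, d} : Set (ℝ × ℝ))

namespace PW
abbrev Pt := ℝ × ℝ

/-! ### small combinatorics on `ZMod 5` -/

def Adj (i j : ZMod 5) : Prop := j = i + 1 ∨ i = j + 1
instance (i j : ZMod 5) : Decidable (Adj i j) := by unfold Adj; infer_instance
def midl (i j : ZMod 5) : ZMod 5 :=
  if j = i + 2 then i + 1 else if j = i + 3 then i + 4 else i + 1
lemma midl_adj {i j : ZMod 5} (h : ¬ Adj i j) : Adj (midl i j) i ∧ Adj (midl i j) j := by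
  revert h; revert i j; decide
lemma adj_triangle {i j k : ZMod 5} : Adj i j → Adj j k → Adj i k → False := by
  revert i j k; decide
lemma adj_symm {i j : ZMod 5} (h : Adj i j) : Adj j i := Or.symm h

/-! ### geometric helper lemmas -/

lemma mem_os_iff_sbtw {u v x : Pt} (h : u ≠ v) :
    x ∈ openSegment ℝ u v ↔ Sbtw ℝ u x v := by
  rw [openSegment_eq_image_lineMap, sbtw_iff_mem_image_Ioo_and_ne]
  exact (and_iff_left h).symm

lemma os_uncountable {u v : Pt} (h : u ≠ v) : ¬ (openSegment ℝ u v).Countable := by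
  intro hc
  rw [openSegment_eq_image_lineMap] at hc
  have hinj : Function.Injective (AffineMap.lineMap u v : ℝ →ᵃ[ℝ] Pt) :=
    AffineMap.lineMap_injective ℝ h
  have h2 : (Set.Ioo (0:ℝ) 1).Countable :=
    (hc.preimage hinj).mono (Set.subset_preimage_image _ _)
  have h3 := h2.le_aleph0
  rw [Cardinal.mk_Ioo_real (by norm_num : (0:ℝ) < 1)] at h3
  exact (Cardinal.aleph0_lt_continuum.not_ge) h3

lemma collinear_det {a b c : Pt} (h : Collinear ℝ ({a, b, c} : Set Pt)) :
    (b.1 - a.1) * (c.2 - a.2) - (b.2 - a.2) * (c.1 - a.1) = 0 := by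
  obtain ⟨v, hv⟩ := (collinear_iff_of_mem (Set.mem_insert a {b, c})).1 h
  obtain ⟨s, hs⟩ := hv b (by simp)
  obtain ⟨t, ht⟩ := hv c (by simp)
  have hs1 : b.1 = s * v.1 + a.1 := by rw [hs]; rfl
  have hs2 : b.2 = s * v.2 + a.2 := by rw [hs]; rfl
  have ht1 : c.1 = t * v.1 + a.1 := by rw [ht]; rfl
  have ht2 : c.2 = t * v.2 + a.2 := by rw [ht]; rfl
  rw [hs1, hs2, ht1, ht2]; ring

lemma parabola_noncollinear {a b c : ℝ} (hab : a ≠ b) (hac : a ≠ c) (hbc : b ≠ c) :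
    ¬ Collinear ℝ ({(a, a^2), (b, b^2), (c, c^2)} : Set Pt) := by
  intro h
  have hd := collinear_det h
  dsimp only at hd
  have h2 : (b - a) * (c - a) * (c - b) = 0 := by nlinarith [hd]
  rcases mul_eq_zero.1 h2 with h3 | h3
  · rcases mul_eq_zero.1 h3 with h4 | h4
    · exact hab (sub_eq_zero.1 h4).symm
    · exact hac (sub_eq_zero.1 h4).symm
  · exact hbc (sub_eq_zero.1 h3).symm

lemma exists_good_blocker {S : Set Pt} (hS : S.Countable) {u v : Pt} (huv : u ≠ v)
    (hline : ∀ w ∈ S, Collinear ℝ ({u, v, w} : Set Pt) → w = u ∨ w = v) :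
    ∃ x ∈ openSegment ℝ u v, ∀ p ∈ S, ∀ q ∈ S, p ≠ q →
      ({p, q} : Set Pt) ≠ ({u, v} : Set Pt) → ¬ Collinear ℝ ({p, q, x} : Set Pt) := by
  classical
  set Bad : Set Pt := ⋃ p ∈ S, ⋃ q ∈ S,
    {x | x ∈ openSegment ℝ u v ∧ p ≠ q ∧ ({p, q} : Set Pt) ≠ ({u, v} : Set Pt)
      ∧ Collinear ℝ ({p, q, x} : Set Pt)} with hBad
  have key : ∀ p ∈ S, ∀ q ∈ S, Set.Subsingleton
      {x | x ∈ openSegment ℝ u v ∧ p ≠ q ∧ ({p, q} : Set Pt) ≠ ({u, v} : Set Pt)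
        ∧ Collinear ℝ ({p, q, x} : Set Pt)} := by
    intro p hp q hq x hx y hy
    by_contra hxy
    obtain ⟨hxseg, hpq, hnepq, hcx⟩ := hx
    obtain ⟨hyseg, -, -, hcy⟩ := hy
    have hxL : x ∈ line[ℝ, p, q] :=
      hcx.mem_affineSpan_of_mem_of_ne (by simp) (by simp) (by simp) hpq
    have hyL : y ∈ line[ℝ, p, q] :=
      hcy.mem_affineSpan_of_mem_of_ne (by simp) (by simp) (by simp) hpq
    have hC1 : Collinear ℝ ({x, y, p, q} : Set Pt) :=
      collinear_insert_insert_of_mem_affineSpan_pair hxL hyL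
    have hxuv : Collinear ℝ ({u, x, v} : Set Pt) := ((mem_os_iff_sbtw huv).1 hxseg).wbtw.collinear
    have hyuv : Collinear ℝ ({u, y, v} : Set Pt) := ((mem_os_iff_sbtw huv).1 hyseg).wbtw.collinear
    have hxU : x ∈ line[ℝ, u, v] :=
      hxuv.mem_affineSpan_of_mem_of_ne (by simp) (by simp) (by simp) huv
    have hyU : y ∈ line[ℝ, u, v] :=
      hyuv.mem_affineSpan_of_mem_of_ne (by simp) (by simp) (by simp) huv
    have hC2 : Collinear ℝ ({x, y, u, v} : Set Pt) :=
      collinear_insert_insert_of_mem_affineSpan_pair hxU hyU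
    have hpxy : p ∈ line[ℝ, x, y] :=
      hC1.mem_affineSpan_of_mem_of_ne (by simp) (by simp) (by simp) hxy
    have hqxy : q ∈ line[ℝ, x, y] :=
      hC1.mem_affineSpan_of_mem_of_ne (by simp) (by simp) (by simp) hxy
    have huxy : u ∈ line[ℝ, x, y] :=
      hC2.mem_affineSpan_of_mem_of_ne (by simp) (by simp) (by simp) hxy
    have hvxy : v ∈ line[ℝ, x, y] :=
      hC2.mem_affineSpan_of_mem_of_ne (by simp) (by simp) (by simp) hxy
    have hcolp : Collinear ℝ ({u, v, p} : Set Pt) :=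
      collinear_triple_of_mem_affineSpan_pair huxy hvxy hpxy
    have hcolq : Collinear ℝ ({u, v, q} : Set Pt) :=
      collinear_triple_of_mem_affineSpan_pair huxy hvxy hqxy
    rcases hline p hp hcolp with rfl | rfl <;> rcases hline q hq hcolq with rfl | rfl
    · exact hpq rfl
    · exact hnepq rfl
    · exact hnepq (Set.pair_comm _ _)
    · exact hpq rfl
  have hBadC : Bad.Countable :=
    hS.biUnion fun p hp => hS.biUnion fun q hq => (key p hp q hq).countable
  have hns : ¬ (openSegment ℝ u v ⊆ Bad) := fun hsub => os_uncountable huv (hBadC.mono hsub)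
  obtain ⟨x, hxseg, hxBad⟩ := Set.not_subset.1 hns
  refine ⟨x, hxseg, fun p hp q hq hpq hnepq hcol => hxBad ?_⟩
  exact Set.mem_biUnion hp (Set.mem_biUnion hq ⟨hxseg, hpq, hnepq, hcol⟩)

/-! ### invariants -/

def Wd (S : Set (Pt × ZMod 5)) : Prop := ∀ a ∈ S, ∀ b ∈ S, a.1 = b.1 → a.2 = b.2
def Amid (S : Set (Pt × ZMod 5)) : Prop :=
  ∀ a ∈ S, ∀ b ∈ S, ∀ c ∈ S, a.1 ≠ b.1 → c.1 ∈ openSegment ℝ a.1 b.1 →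
    Adj c.2 a.2 ∧ Adj c.2 b.2

lemma pairs_eq {u v p q r : Pt} (hne : u ≠ v) (h1 : ({p, q} : Set Pt) = {u, v})
    (h2 : ({p, r} : Set Pt) = {u, v}) (hqr : q ≠ r) : False := by
  rcases Set.pair_eq_pair_iff.1 h1 with ⟨h3, h4⟩ | ⟨h3, h4⟩ <;>
    rcases Set.pair_eq_pair_iff.1 h2 with ⟨h5, h6⟩ | ⟨h5, h6⟩
  · exact hqr (h4.trans h6.symm)
  · exact hne (h3.symm.trans h5)
  · exact hne (h5.symm.trans h3)
  · exact hqr (h4.trans h6.symm)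
theorem extend {S : Set (Pt × ZMod 5)} {u v : Pt} {i j : ZMod 5} {x : Pt}
    (hW : Wd S) (hA : Amid S) (hB : No4Collinear (Prod.fst '' S))
    (hui : (u, i) ∈ S) (hvj : (v, j) ∈ S) (hne : u ≠ v) (hnadj : ¬ Adj i j)
    (hunb : ∀ w ∈ Prod.fst '' S, w ∉ openSegment ℝ u v)
    (hxseg : x ∈ openSegment ℝ u v)
    (havoid : ∀ p ∈ Prod.fst '' S, ∀ q ∈ Prod.fst '' S, p ≠ q →
      ({p, q} : Set Pt) ≠ ({u, v} : Set Pt) → ¬ Collinear ℝ ({p, q, x} : Set Pt)) :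
    Wd (S ∪ {(x, midl i j)}) ∧ Amid (S ∪ {(x, midl i j)}) ∧
      No4Collinear (Prod.fst '' (S ∪ {(x, midl i j)})) := by
  have hsx : Sbtw ℝ u x v := (mem_os_iff_sbtw hne).1 hxseg
  have F1 : x ∉ Prod.fst '' S := fun hmem => hunb x hmem hxseg
  have F2 : ∀ p ∈ Prod.fst '' S, ∀ q ∈ Prod.fst '' S, p ≠ q →
      Collinear ℝ ({p, q, x} : Set Pt) → ({p, q} : Set Pt) = {u, v} := by
    intro p hp q hq hpq hcol
    by_contra hcon
    exact havoid p hp q hq hpq hcon hcol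
  -- a generic reordering fact
  have reord : ∀ p q : Pt, ({p, x, q} : Set Pt) = {p, q, x} := by
    intro p q; rw [Set.pair_comm x q]
  have reord2 : ∀ p q : Pt, ({x, p, q} : Set Pt) = {p, q, x} := by
    intro p q; ext y; simp; tauto
  have key3 : ∀ p q r : Pt, p ∈ Prod.fst '' S → q ∈ Prod.fst '' S → r ∈ Prod.fst '' S →
      p ≠ q → p ≠ r → q ≠ r → Collinear ℝ ({p, q, x} : Set Pt) →
      Collinear ℝ ({p, r, x} : Set Pt) → False := by
    intro p q r hp hq hr hpq hpr hqr h1 h2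
    exact pairs_eq hne (F2 p hp q hq hpq h1) (F2 p hp r hr hpr h2) hqr
  refine ⟨?_, ?_, ?_⟩
  · -- Wd
    rintro a (ha | rfl) b (hb | rfl) h1
    · exact hW a ha b hb h1
    · exact absurd ⟨a, ha, h1⟩ F1
    · exact absurd ⟨b, hb, h1.symm⟩ F1
    · rfl
  · -- Amid
    rintro a (ha | rfl) b (hb | rfl) c (hc | rfl) hab hseg
    · exact hA a ha b hb c hc hab hseg
    · -- c new
      simp only at hseg hab ⊢
      have hsb : Sbtw ℝ a.1 x b.1 := (mem_os_iff_sbtw hab).1 hseg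
      have hcola : Collinear ℝ ({a.1, b.1, x} : Set Pt) := by
        rw [← reord]; exact hsb.wbtw.collinear
      have hpair := F2 a.1 ⟨a, ha, rfl⟩ b.1 ⟨b, hb, rfl⟩ hab hcola
      rcases Set.pair_eq_pair_iff.1 hpair with ⟨h3, h4⟩ | ⟨h3, h4⟩
      · have ha2 : a.2 = i := hW a ha (u, i) hui h3
        have hb2 : b.2 = j := hW b hb (v, j) hvj h4
        rw [ha2, hb2]
        exact midl_adj hnadj
      · have ha2 : a.2 = j := hW a ha (v, j) hvj h3
        have hb2 : b.2 = i := hW b hb (u, i) hui h4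
        rw [ha2, hb2]
        exact ⟨(midl_adj hnadj).2, (midl_adj hnadj).1⟩
    · -- b new, a c old
      simp only at hseg hab ⊢
      rw [openSegment_symm] at hseg
      have hsb : Sbtw ℝ x c.1 a.1 := (mem_os_iff_sbtw (Ne.symm hab)).1 hseg
      have hcol : Collinear ℝ ({c.1, a.1, x} : Set Pt) := by
        rw [← reord2]; exact hsb.wbtw.collinear
      have hpair := F2 c.1 ⟨c, hc, rfl⟩ a.1 ⟨a, ha, rfl⟩ hsb.ne_right hcol
      rcases Set.pair_eq_pair_iff.1 hpair with ⟨h3, h4⟩ | ⟨h3, h4⟩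
      · rw [h3, h4] at hsb
        exact absurd hsb.wbtw hsx.not_swap_left
      · rw [h3, h4] at hsb
        exact absurd hsb.wbtw hsx.symm.not_swap_left
    · -- b, c new
      simp only at hseg hab
      have hsb : Sbtw ℝ a.1 x x := (mem_os_iff_sbtw hab).1 hseg
      exact absurd rfl hsb.ne_right
    · -- a new, b c old
      simp only at hseg hab ⊢
      have hsb : Sbtw ℝ x c.1 b.1 := (mem_os_iff_sbtw hab).1 hseg
      have hcol : Collinear ℝ ({c.1, b.1, x} : Set Pt) := by
        rw [← reord2]; exact hsb.wbtw.collinear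
      have hpair := F2 c.1 ⟨c, hc, rfl⟩ b.1 ⟨b, hb, rfl⟩ hsb.ne_right hcol
      rcases Set.pair_eq_pair_iff.1 hpair with ⟨h3, h4⟩ | ⟨h3, h4⟩
      · rw [h3, h4] at hsb
        exact absurd hsb.wbtw hsx.not_swap_left
      · rw [h3, h4] at hsb
        exact absurd hsb.wbtw hsx.symm.not_swap_left
    · -- a, c new
      simp only at hseg hab
      have hsb : Sbtw ℝ x x b.1 := (mem_os_iff_sbtw hab).1 hseg
      exact absurd rfl hsb.ne_left
    · -- a, b new
      simp only at hab
      exact absurd rfl hab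
    · -- all new
      simp only at hab
      exact absurd rfl hab
  · -- No4Collinear
    have himg : Prod.fst '' (S ∪ {(x, midl i j)}) = Prod.fst '' S ∪ {x} := by
      rw [Set.image_union, Set.image_singleton]
    rw [himg]
    rintro a (ha | rfl) b (hb | rfl) c (hc | rfl) d (hd | rfl)
      hab hac had hbc hbd hcd hcol
    · exact hB a ha b hb c hc d hd hab hac had hbc hbd hcd hcol
    · -- d = x
      exact key3 a b c ha hb hc hab hac hbc
        (hcol.subset (by intro y; simp; tauto)) (hcol.subset (by intro y; simp; tauto))
    · -- c = x
      exact key3 a b d ha hb hd hab had hbd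
        (hcol.subset (by intro y; simp; tauto)) (hcol.subset (by intro y; simp; tauto))
    · exact absurd rfl hcd
    · -- b = x
      exact key3 a c d ha hc hd hac had hcd
        (hcol.subset (by intro y; simp; tauto)) (hcol.subset (by intro y; simp; tauto))
    · exact absurd rfl hbd
    · exact absurd rfl hbc
    · exact absurd rfl hbc
    · -- a = x
      exact key3 b c d hb hc hd hbc hbd hcd
        (hcol.subset (by intro y; simp; tauto)) (hcol.subset (by intro y; simp; tauto))
    · exact absurd rfl had
    · exact absurd rfl hac
    · exact absurd rfl hac
    · exact absurd rfl hab
    · exact absurd rfl hab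
    · exact absurd rfl hab
    · exact absurd rfl hab

/-! ### the recursive construction -/

def sd (k : ℕ) : Pt := ((k : ℝ), (k : ℝ)^2)
def seedL (k : ℕ) : Pt × ZMod 5 := (sd k, 0)

open scoped Classical in
/-- if the pair `(u,v)` with levels `(i,j)` needs and admits a blocker w.r.t. the
current point set `S`, pick one (labelled with a level adjacent to both `i` and `j`);
otherwise return a dummy seed point. -/
noncomputable def core (u v : Pt) (i j : ZMod 5) (S : Set Pt) : Pt × ZMod 5 :=
  if h : (u ≠ v ∧ ¬ Adj i j ∧ ∀ w ∈ S, w ∉ openSegment ℝ u v) ∧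
      ∃ x, x ∈ openSegment ℝ u v ∧ ∀ p ∈ S, ∀ q ∈ S, p ≠ q →
        ({p, q} : Set Pt) ≠ ({u, v} : Set Pt) → ¬ Collinear ℝ ({p, q, x} : Set Pt)
  then (h.2.choose, midl i j) else seedL 0

noncomputable def ptOf (h : ℕ → Pt × ZMod 5) (m : ℕ) : Pt × ZMod 5 :=
  if m % 2 = 0 then seedL (m / 2) else h (m / 2)

def SpreL (h : ℕ → Pt × ZMod 5) (n : ℕ) : Set (Pt × ZMod 5) :=
  Set.range seedL ∪ h '' Set.Iio n

noncomputable def step (n : ℕ) (h : ℕ → Pt × ZMod 5) : Pt × ZMod 5 :=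
  core (ptOf h n.unpair.1).1 (ptOf h n.unpair.2).1
    (ptOf h n.unpair.1).2 (ptOf h n.unpair.2).2 (Prod.fst '' SpreL h n)

noncomputable def Hh : ℕ → ℕ → Pt × ZMod 5
  | 0 => fun _ => seedL 0
  | n + 1 => fun m => if m = n then step n (Hh n) else Hh n m

noncomputable def blk (n : ℕ) : Pt × ZMod 5 := step n (Hh n)

lemma Hh_eq {n m : ℕ} (h : m < n) : Hh n m = blk m := by
  induction n with
  | zero => omega
  | succ n ih =>
    by_cases hm : m = n
    · subst hm; simp [Hh, blk]
    · have : m < n := by omega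
      simp [Hh, hm, ih this]

lemma ptOf_congr {n : ℕ} {h h' : ℕ → Pt × ZMod 5} (he : ∀ m < n, h m = h' m)
    {a : ℕ} (ha : a ≤ n) : ptOf h a = ptOf h' a := by
  unfold ptOf
  by_cases hp : a % 2 = 0
  · simp [hp]
  · have h1 : 0 < a := by omega
    have : a / 2 < n := lt_of_lt_of_le (Nat.div_lt_self h1 (by norm_num)) ha
    simp [hp, he _ this]

lemma step_congr {n : ℕ} {h h' : ℕ → Pt × ZMod 5} (he : ∀ m < n, h m = h' m) :
    step n h = step n h' := by
  unfold step
  have h1 : ptOf h n.unpair.1 = ptOf h' n.unpair.1 := ptOf_congr he (Nat.unpair_left_le n)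
  have h2 : ptOf h n.unpair.2 = ptOf h' n.unpair.2 := ptOf_congr he (Nat.unpair_right_le n)
  have h3 : SpreL h n = SpreL h' n := by
    unfold SpreL
    congr 1
    exact Set.image_congr fun m hm => he m hm
  rw [h1, h2, h3]

lemma blk_eq (n : ℕ) : blk n = step n blk :=
  step_congr fun m hm => Hh_eq hm

noncomputable def SLn (n : ℕ) : Set (Pt × ZMod 5) := SpreL blk n
noncomputable def Sn (n : ℕ) : Set Pt := Prod.fst '' SLn n
noncomputable def SL : Set (Pt × ZMod 5) := Set.range seedL ∪ Set.range blk
noncomputable def Pset : Set Pt := Prod.fst '' SL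

lemma SLn_mono {n n' : ℕ} (h : n ≤ n') : SLn n ⊆ SLn n' :=
  Set.union_subset_union (subset_refl _) (Set.image_mono (Set.Iio_subset_Iio h))

lemma SLn_subset_SL (n : ℕ) : SLn n ⊆ SL :=
  Set.union_subset_union (subset_refl _) (Set.image_subset_range _ _)

lemma SLn_succ (n : ℕ) : SLn (n + 1) = SLn n ∪ {blk n} := by
  unfold SLn SpreL
  rw [Set.union_assoc]
  congr 1
  rw [show Set.Iio (n+1) = insert n (Set.Iio n) by ext m; simp]
  rw [Set.image_insert_eq]
  rw [Set.union_comm]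
  rfl

lemma mem_SLn_of_mem_SL {z : Pt × ZMod 5} (h : z ∈ SL) : ∃ n, z ∈ SLn n := by
  rcases h with h | ⟨m, rfl⟩
  · exact ⟨0, Or.inl h⟩
  · exact ⟨m + 1, Or.inr ⟨m, by simp, rfl⟩⟩

lemma SLn_countable (n : ℕ) : (SLn n).Countable :=
  (Set.countable_range _).union ((Set.countable_range blk).mono (Set.image_subset_range _ _))

lemma Sn_countable (n : ℕ) : (Sn n).Countable := (SLn_countable n).image _

lemma ptOf_mem {m n : ℕ} (h : m ≤ n) : ptOf blk m ∈ SLn n := by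
  unfold ptOf
  by_cases hp : m % 2 = 0
  · rw [if_pos hp]; exact Or.inl ⟨m / 2, rfl⟩
  · rw [if_neg hp]
    have h1 : 0 < m := by omega
    exact Or.inr ⟨m / 2, lt_of_lt_of_le (Nat.div_lt_self h1 (by norm_num)) h, rfl⟩

lemma sd_ne {k k' : ℕ} (h : sd k ≠ sd k') : (k : ℝ) ≠ (k' : ℝ) := by
  intro he; exact h (by unfold sd; rw [he])

/-! ### base case -/

lemma SLn_zero : SLn 0 = Set.range seedL := by
  unfold SLn SpreL
  rw [show Set.Iio (0:ℕ) = ∅ by ext m; simp, Set.image_empty, Set.union_empty]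

lemma base_Wd : Wd (SLn 0) := by
  rw [SLn_zero]
  rintro a ⟨k, rfl⟩ b ⟨k', rfl⟩ _
  rfl

lemma base_Amid : Amid (SLn 0) := by
  rw [SLn_zero]
  rintro a ⟨ka, rfl⟩ b ⟨kb, rfl⟩ c ⟨kc, rfl⟩ hab hseg
  exfalso
  simp only [seedL] at hab hseg
  have hsb : Sbtw ℝ (sd ka) (sd kc) (sd kb) := (mem_os_iff_sbtw hab).1 hseg
  have hcol : Collinear ℝ ({sd ka, sd kc, sd kb} : Set Pt) := hsb.wbtw.collinear
  exact parabola_noncollinear (sd_ne hsb.ne_left.symm)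
    (sd_ne hab) (sd_ne hsb.ne_right) hcol

lemma base_B4 : No4Collinear (Sn 0) := by
  rintro a ⟨za, hza, rfl⟩ b ⟨zb, hzb, rfl⟩ c ⟨zc, hzc, rfl⟩ d ⟨zd, hzd, rfl⟩
    hab hac had hbc hbd hcd hcol
  rw [SLn_zero] at hza hzb hzc
  obtain ⟨ka, rfl⟩ := hza
  obtain ⟨kb, rfl⟩ := hzb
  obtain ⟨kc, rfl⟩ := hzc
  simp only [seedL] at hab hac hbc hcol
  have h3 : Collinear ℝ ({sd ka, sd kb, sd kc} : Set Pt) :=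
    hcol.subset (by intro y; simp; tauto)
  exact parabola_noncollinear (sd_ne hab) (sd_ne hac) (sd_ne hbc) h3

/-! ### the invariant, by induction -/

theorem inv : ∀ n, Wd (SLn n) ∧ Amid (SLn n) ∧ No4Collinear (Sn n) := by
  intro n
  induction n with
  | zero => exact ⟨base_Wd, base_Amid, base_B4⟩
  | succ n ih =>
    obtain ⟨ihW, ihA, ihB⟩ := ih
    have hbn : blk n = core (ptOf blk n.unpair.1).1 (ptOf blk n.unpair.2).1
        (ptOf blk n.unpair.1).2 (ptOf blk n.unpair.2).2 (Sn n) := by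
      rw [blk_eq]; rfl
    by_cases hc : ((ptOf blk n.unpair.1).1 ≠ (ptOf blk n.unpair.2).1 ∧
        ¬ Adj (ptOf blk n.unpair.1).2 (ptOf blk n.unpair.2).2 ∧
        ∀ w ∈ Sn n, w ∉ openSegment ℝ (ptOf blk n.unpair.1).1 (ptOf blk n.unpair.2).1) ∧
        ∃ x, x ∈ openSegment ℝ (ptOf blk n.unpair.1).1 (ptOf blk n.unpair.2).1 ∧
          ∀ p ∈ Sn n, ∀ q ∈ Sn n, p ≠ q →
            ({p, q} : Set Pt) ≠ ({(ptOf blk n.unpair.1).1, (ptOf blk n.unpair.2).1} : Set Pt) →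
            ¬ Collinear ℝ ({p, q, x} : Set Pt)
    · -- a blocker is added
      have hbn2 : blk n = (hc.2.choose, midl (ptOf blk n.unpair.1).2 (ptOf blk n.unpair.2).2) := by
        rw [hbn]; unfold core; rw [dif_pos hc]
      have hui : ((ptOf blk n.unpair.1).1, (ptOf blk n.unpair.1).2) ∈ SLn n := by
        rw [Prod.mk.eta]; exact ptOf_mem (Nat.unpair_left_le n)
      have hvj : ((ptOf blk n.unpair.2).1, (ptOf blk n.unpair.2).2) ∈ SLn n := by
        rw [Prod.mk.eta]; exact ptOf_mem (Nat.unpair_right_le n)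
      have hext := extend ihW ihA ihB hui hvj hc.1.1 hc.1.2.1 hc.1.2.2
        hc.2.choose_spec.1 hc.2.choose_spec.2
      rw [show Sn (n+1) = Prod.fst '' SLn (n+1) from rfl, SLn_succ, hbn2]
      exact ⟨hext.1, hext.2.1, hext.2.2⟩
    · -- nothing is added
      have hbn2 : blk n = seedL 0 := by
        rw [hbn]; unfold core; rw [dif_neg hc]
      have hsub : ({blk n} : Set (Pt × ZMod 5)) ⊆ SLn n := by
        rw [hbn2]; intro z hz; rw [hz]; exact Or.inl ⟨0, rfl⟩
      have hSL : SLn (n + 1) = SLn n := by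
        rw [SLn_succ]; exact Set.union_eq_self_of_subset_right hsub
      rw [show Sn (n+1) = Prod.fst '' SLn (n+1) from rfl, hSL]
      exact ⟨ihW, ihA, ihB⟩

/-! ### the visibility property -/

lemma code_pt {z : Pt × ZMod 5} (h : z ∈ SL) :
    ∃ m, ptOf blk m = z ∧ ∀ n, m ≤ n → z ∈ SLn n := by
  rcases h with ⟨k, rfl⟩ | ⟨m0, rfl⟩
  · refine ⟨2 * k, ?_, fun n _ => Or.inl ⟨k, rfl⟩⟩
    unfold ptOf
    rw [if_pos (by omega)]
    congr 1
    omega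
  · refine ⟨2 * m0 + 1, ?_, fun n hn => Or.inr ⟨m0, by simp; omega, rfl⟩⟩
    unfold ptOf
    rw [if_neg (by omega)]
    congr 1
    omega

lemma adj_of_visible {A B : Pt × ZMod 5} (hA : A ∈ SL) (hB : B ∈ SL)
    (hvis : Visible Pset A.1 B.1) : Adj A.2 B.2 := by
  obtain ⟨ma, hpa, hma⟩ := code_pt hA
  obtain ⟨mb, hpb, hmb⟩ := code_pt hB
  set n := Nat.pair ma mb with hn
  have hu1 : n.unpair.1 = ma := by rw [hn, Nat.unpair_pair]
  have hu2 : n.unpair.2 = mb := by rw [hn, Nat.unpair_pair]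
  have h1 : ptOf blk n.unpair.1 = A := by rw [hu1]; exact hpa
  have h2 : ptOf blk n.unpair.2 = B := by rw [hu2]; exact hpb
  have hAn : A ∈ SLn n := hma n (Nat.left_le_pair ma mb)
  have hBn : B ∈ SLn n := hmb n (Nat.right_le_pair ma mb)
  by_contra hnadj
  have hne : A.1 ≠ B.1 := hvis.1
  have hSub : Sn n ⊆ Pset := Set.image_mono (SLn_subset_SL n)
  have hunb : ∀ w ∈ Sn n, w ∉ openSegment ℝ A.1 B.1 := fun w hw => hvis.2 w (hSub hw)
  have hline : ∀ w ∈ Sn n, Collinear ℝ ({A.1, B.1, w} : Set Pt) → w = A.1 ∨ w = B.1 := by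
    intro w hw hcol
    by_contra hcon
    push_neg at hcon
    obtain ⟨hwu, hwv⟩ := hcon
    obtain ⟨W, hWmem, rfl⟩ := hw
    rcases hcol.wbtw_or_wbtw_or_wbtw with h | h | h
    · -- B.1 is the middle point
      have hsb : Sbtw ℝ A.1 B.1 W.1 := ⟨h, hne.symm, fun e => hwv e.symm⟩
      have hos : B.1 ∈ openSegment ℝ A.1 W.1 := (mem_os_iff_sbtw hsb.left_ne_right).2 hsb
      have := (inv n).2.1 A hAn W hWmem B hBn hsb.left_ne_right hos
      exact hnadj (adj_symm this.1)
    · -- W.1 is the middle point : contradicts unblockedness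
      have hsb : Sbtw ℝ B.1 W.1 A.1 := ⟨h, hwv, hwu⟩
      have hos : W.1 ∈ openSegment ℝ B.1 A.1 := (mem_os_iff_sbtw hne.symm).2 hsb
      rw [openSegment_symm] at hos
      exact hunb W.1 ⟨W, hWmem, rfl⟩ hos
    · -- A.1 is the middle point
      have hsb : Sbtw ℝ W.1 A.1 B.1 := ⟨h, fun e => hwu e.symm, hne⟩
      have hos : A.1 ∈ openSegment ℝ W.1 B.1 := (mem_os_iff_sbtw hsb.left_ne_right).2 hsb
      have := (inv n).2.1 W hWmem B hBn A hAn hsb.left_ne_right hos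
      exact hnadj this.2
  obtain ⟨x, hxseg, hav⟩ := exists_good_blocker (Sn_countable n) hne hline
  have hcond : (A.1 ≠ B.1 ∧ ¬ Adj A.2 B.2 ∧ ∀ w ∈ Sn n, w ∉ openSegment ℝ A.1 B.1) ∧
      ∃ x, x ∈ openSegment ℝ A.1 B.1 ∧ ∀ p ∈ Sn n, ∀ q ∈ Sn n, p ≠ q →
        ({p, q} : Set Pt) ≠ ({A.1, B.1} : Set Pt) → ¬ Collinear ℝ ({p, q, x} : Set Pt) :=
    ⟨⟨hne, hnadj, hunb⟩, ⟨x, hxseg, hav⟩⟩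
  have hbn : blk n = (hcond.2.choose, midl A.2 B.2) := by
    rw [blk_eq]
    show core (ptOf blk n.unpair.1).1 (ptOf blk n.unpair.2).1
      (ptOf blk n.unpair.1).2 (ptOf blk n.unpair.2).2 (Sn n) = _
    simp only [h1, h2]
    unfold core
    rw [dif_pos hcond]
  have hxPset : (blk n).1 ∈ Pset := ⟨blk n, Or.inr ⟨n, rfl⟩, rfl⟩
  have hxos : (blk n).1 ∈ openSegment ℝ A.1 B.1 := by
    rw [hbn]
    exact hcond.2.choose_spec.1
  exact hvis.2 (blk n).1 hxPset hxos

/-! ### main theorem ingredients -/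

lemma Pset_countable : Pset.Countable :=
  (((Set.countable_range seedL).union (Set.countable_range blk))).image _

lemma Pset_infinite : Pset.Infinite := by
  refine Set.infinite_of_injective_forall_mem (f := sd) ?_ fun k => ⟨seedL k, Or.inl ⟨k, rfl⟩, rfl⟩
  intro k k' h
  have h2 : (k : ℝ) = (k' : ℝ) := congrArg Prod.fst h
  exact_mod_cast h2

lemma Pset_no4 : No4Collinear Pset := by
  rintro a ⟨za, hza, rfl⟩ b ⟨zb, hzb, rfl⟩ c ⟨zc, hzc, rfl⟩ d ⟨zd, hzd, rfl⟩
    hab hac had hbc hbd hcd hcol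
  obtain ⟨na, hna⟩ := mem_SLn_of_mem_SL hza
  obtain ⟨nb, hnb⟩ := mem_SLn_of_mem_SL hzb
  obtain ⟨nc, hnc⟩ := mem_SLn_of_mem_SL hzc
  obtain ⟨nd, hnd⟩ := mem_SLn_of_mem_SL hzd
  set N := max (max na nb) (max nc nd)
  have hmem : ∀ {m : ℕ} {z : Pt × ZMod 5}, z ∈ SLn m → m ≤ N → z.1 ∈ Sn N :=
    fun hz hm => ⟨_, SLn_mono hm hz, rfl⟩
  exact (inv N).2.2 za.1 (hmem hna (by omega)) zb.1 (hmem hnb (by omega))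
    zc.1 (hmem hnc (by omega)) zd.1 (hmem hnd (by omega))
    hab hac had hbc hbd hcd hcol

lemma Pset_no_triangle :
    ¬ ∃ a ∈ Pset, ∃ b ∈ Pset, ∃ c ∈ Pset,
      Visible Pset a b ∧ Visible Pset a c ∧ Visible Pset b c := by
  rintro ⟨a, ⟨A, hA, rfl⟩, b, ⟨B, hB, rfl⟩, c, ⟨C, hC, rfl⟩, hab, hac, hbc⟩
  exact adj_triangle (adj_of_visible hA hB hab) (adj_of_visible hB hC hbc)
    (adj_of_visible hA hC hac)

end PW

theorem stmt0 :
    ∃ P : Set (ℝ × ℝ), P.Countable ∧ P.Infinite ∧ No4Collinear P ∧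
      ¬ ∃ a ∈ P, ∃ b ∈ P, ∃ c ∈ P,
        Visible P a b ∧ Visible P a c ∧ Visible P b c :=
  ⟨PW.Pset, PW.Pset_countable, PW.Pset_infinite, PW.Pset_no4, PW.Pset_no_triangle⟩
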